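/- Let α > 0, 0 < ρ < 1 with α + ρ = 1, M ≥ 0, and 0 < v < u ≤ T. Then ρ ∫₀ᵛ M y^α (y^{ρ−1} − (y + u − v)^{ρ−1}) dy ≤ ρ M (u − v) ln(T/(u − v)). -/

import Mathlib

open MeasureTheory intervalIntegral Real

theorem I1_critical_case (α ρ M T u v : ℝ) (hα : 0 < α) (hρ0 : 0 < ρ) (hρ1 : ρ < 1)
    (hsum : α + ρ = 1) (hM : 0 ≤ M) (hv : 0 < v) (hvu : v < u) (huT : u ≤ T) :
    ρ * ∫ y in (0:ℝ)..v, M * y ^ α * (y ^ (ρ - 1) - (y + u - v) ^ (ρ - 1))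
      ≤ ρ * M * (u - v) * Real.log (T / (u - v)) := by
  set d : ℝ := u - v with hd_def
  have hd : 0 < d := by simp [hd_def]; linarith
  have hαρ : ρ - 1 = -α := by linarith
  -- Step A: rewrite integrand on Ioc 0 v
  have heq : ∀ y ∈ Set.Ioc (0:ℝ) v,
      M * y ^ α * (y ^ (ρ - 1) - (y + u - v) ^ (ρ - 1))
        = M * (1 - (y / (y + d)) ^ α) := by
    intro y hy
    have hy0 : 0 < y := hy.1
    have hyd : 0 < y + d := by linarith
    have h1 : y ^ α * y ^ (ρ - 1) = 1 := by
      rw [← Real.rpow_add hy0]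
      have : α + (ρ - 1) = 0 := by linarith
      rw [this, Real.rpow_zero]
    have h2 : y ^ α * (y + u - v) ^ (ρ - 1) = (y / (y + d)) ^ α := by
      have huv : y + u - v = y + d := by rw [hd_def]; ring
      rw [huv, hαρ, Real.rpow_neg hyd.le, Real.div_rpow hy0.le hyd.le]
      rw [div_eq_mul_inv]
    have huv : y + u - v = y + d := by rw [hd_def]; ring
    calc M * y ^ α * (y ^ (ρ - 1) - (y + u - v) ^ (ρ - 1))
        = M * (y ^ α * y ^ (ρ - 1) - y ^ α * (y + u - v) ^ (ρ - 1)) := by ring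
      _ = M * (1 - (y / (y + d)) ^ α) := by rw [h1, h2]
  have hint_eq : (∫ y in (0:ℝ)..v, M * y ^ α * (y ^ (ρ - 1) - (y + u - v) ^ (ρ - 1)))
      = ∫ y in (0:ℝ)..v, M * (1 - (y / (y + d)) ^ α) := by
    rw [intervalIntegral.integral_of_le hv.le, intervalIntegral.integral_of_le hv.le]
    exact setIntegral_congr_fun measurableSet_Ioc heq
  rw [hint_eq]
  -- continuity facts
  have hcont1 : ContinuousOn (fun y : ℝ => M * (1 - (y / (y + d)) ^ α)) (Set.Icc 0 v) := by
    apply ContinuousOn.mul continuousOn_const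
    apply ContinuousOn.sub continuousOn_const
    apply ContinuousOn.rpow_const
    · apply ContinuousOn.div continuousOn_id (by fun_prop)
      intro x hx; have := hx.1; positivity
    · intro x hx; exact Or.inr hα.le
  have hcont2 : ContinuousOn (fun y : ℝ => M * (d / (y + d))) (Set.Icc 0 v) := by
    apply ContinuousOn.mul continuousOn_const
    apply ContinuousOn.div continuousOn_const (by fun_prop)
    intro x hx; have := hx.1; positivity
  -- Step C: pointwise bound and mono
  have hmono : (∫ y in (0:ℝ)..v, M * (1 - (y / (y + d)) ^ α))
      ≤ ∫ y in (0:ℝ)..v, M * (d / (y + d)) := by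
    apply intervalIntegral.integral_mono_on hv.le
      (hcont1.intervalIntegrable_of_Icc hv.le) (hcont2.intervalIntegrable_of_Icc hv.le)
    intro y hy
    rcases eq_or_lt_of_le hy.1 with h0 | h0
    · subst h0
      simp [Real.zero_rpow (ne_of_gt hα), div_self hd.ne']
    · have hyd : 0 < y + d := by linarith
      have hbase0 : 0 < y / (y + d) := by positivity
      have hbase1 : y / (y + d) ≤ 1 := by
        rw [div_le_one hyd]; linarith
      have := Real.rpow_le_rpow_of_exponent_ge hbase0 hbase1 (by linarith : α ≤ (1:ℝ))
      rw [Real.rpow_one] at this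
      have key : 1 - (y / (y + d)) ^ α ≤ d / (y + d) := by
        have : 1 - (y / (y + d)) ^ α ≤ 1 - y / (y + d) := by linarith
        have h2 : 1 - y / (y + d) = d / (y + d) := by field_simp; ring
        linarith [h2 ▸ this]
      exact mul_le_mul_of_nonneg_left key hM
  -- Step D: compute the second integral
  have hcomp : (∫ y in (0:ℝ)..v, M * (d / (y + d))) = M * d * Real.log (u / d) := by
    have : (∫ y in (0:ℝ)..v, M * (d / (y + d))) = M * d * ∫ y in (0:ℝ)..v, (y + d)⁻¹ := by
      rw [← intervalIntegral.integral_const_mul]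
      congr 1; ext y; field_simp
    rw [this]
    have h1 : (∫ y in (0:ℝ)..v, (y + d)⁻¹) = ∫ y in d..(v + d), y⁻¹ := by
      have := intervalIntegral.integral_comp_add_right (a := (0:ℝ)) (b := v)
        (fun y => y⁻¹) d
      simpa using this
    rw [h1, integral_inv_of_pos hd (by linarith : 0 < v + d)]
    have : v + d = u := by rw [hd_def]; ring
    rw [this]
  rw [hcomp] at hmono
  -- Step E: log bound and final
  have hlog : Real.log (u / d) ≤ Real.log (T / d) := by
    apply Real.log_le_log (div_pos (hv.trans hvu) hd)
    gcongr
  calc ρ * ∫ y in (0:ℝ)..v, M * (1 - (y / (y + d)) ^ α)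
      ≤ ρ * (M * d * Real.log (u / d)) := by
        exact mul_le_mul_of_nonneg_left hmono hρ0.le
    _ ≤ ρ * (M * d * Real.log (T / d)) := by
        apply mul_le_mul_of_nonneg_left _ hρ0.le
        apply mul_le_mul_of_nonneg_left hlog (by positivity)
    _ = ρ * M * d * Real.log (T / d) := by ring
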